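/- Let V be a finite-dimensional real vector space and let e ∈ ℝ[S_3] be either η or ξ_ν for some ν ∈ ℝ with ν ≠ 1/2. Then the space A(V) of algebraic curvature tensors on V equals the linear span of the set {y_t*(U⊗w) : U a trilinear map V^3 → ℝ with eU = U, w a linear functional on V}. -/

import Mathlib

/-- Action of a group ring element `a ∈ ℝ[S_r]` on an `r`-multilinear map:
`(aT)(v₁,…,v_r) = Σ_p a(p)·T(v_{p(1)},…,v_{p(r)})`. -/
noncomputable def gact {V : Type} [AddCommGroup V] [Module ℝ V] {r : ℕ}
    (a : MonoidAlgebra ℝ (Equiv.Perm (Fin r)))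
    (T : MultilinearMap ℝ (fun _ : Fin r => V) ℝ) :
    MultilinearMap ℝ (fun _ : Fin r => V) ℝ :=
  ∑ p : Equiv.Perm (Fin r), a.coeff p • T.domDomCongr p
/-- Pointwise action of a group ring element `a ∈ ℝ[S_r]` on a function
`T : V^r → ℝ`: `(aT)(v₁,…,v_r) = Σ_p a(p)·T(v_{p(1)},…,v_{p(r)})`. -/
noncomputable def fact {V : Type} [AddCommGroup V] [Module ℝ V] {r : ℕ}
    (a : MonoidAlgebra ℝ (Equiv.Perm (Fin r)))
    (T : (Fin r → V) → ℝ) : (Fin r → V) → ℝ :=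
  fun v => ∑ p : Equiv.Perm (Fin r), a.coeff p * T (fun i => v (p i))
/-- The star map `a* := Σ_p a(p)·p⁻¹` on the group ring `ℝ[S_r]`. -/
noncomputable def astar {r : ℕ} (a : MonoidAlgebra ℝ (Equiv.Perm (Fin r))) :
    MonoidAlgebra ℝ (Equiv.Perm (Fin r)) :=
  MonoidAlgebra.ofCoeff (Finsupp.equivFunOnFinite.symm (fun p => a.coeff p⁻¹))
/-- The Young symmetrizer `y_t = Σ_{p∈H_t} Σ_{q∈V_t} sign(q)·(p∘q)` of the tableau with
rows `{1,3}`, `{2,4}` (indices `0`-based in `Fin 4`):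
`H_t = {id, (1 3), (2 4), (1 3)(2 4)}`, `V_t = {id, (1 2), (3 4), (1 2)(3 4)}`. -/
noncomputable def yt : MonoidAlgebra ℝ (Equiv.Perm (Fin 4)) :=
  (MonoidAlgebra.single 1 1 + MonoidAlgebra.single (Equiv.swap 0 2) 1 +
     MonoidAlgebra.single (Equiv.swap 1 3) 1 +
     MonoidAlgebra.single (Equiv.swap 0 2 * Equiv.swap 1 3) 1) *
  (MonoidAlgebra.single 1 1 - MonoidAlgebra.single (Equiv.swap 0 1) 1 -
     MonoidAlgebra.single (Equiv.swap 2 3) 1 +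
     MonoidAlgebra.single (Equiv.swap 0 1 * Equiv.swap 2 3) 1)
/-- `ξ_ν := (1/3)(id + ν·(2 3) + (1−ν)·(1 2) − ν·(1 2 3) + (ν−1)·(1 3 2) − (1 3)) ∈ ℝ[S_3]`,
with `0`-based indices in `Fin 3`; `finRotate 3` is the cycle `(1 2 3)`. -/
noncomputable def xi (ν : ℝ) : MonoidAlgebra ℝ (Equiv.Perm (Fin 3)) :=
  (1/3 : ℝ) • (MonoidAlgebra.single 1 1 + MonoidAlgebra.single (Equiv.swap 1 2) ν +
    MonoidAlgebra.single (Equiv.swap 0 1) (1 - ν) - MonoidAlgebra.single (finRotate 3) ν +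
    MonoidAlgebra.single (finRotate 3)⁻¹ (ν - 1) - MonoidAlgebra.single (Equiv.swap 0 2) 1)
/-- `η := (1/3)(id − (1 2) − (1 2 3) + (1 3)) ∈ ℝ[S_3]`, with `0`-based indices in `Fin 3`. -/
noncomputable def eta : MonoidAlgebra ℝ (Equiv.Perm (Fin 3)) :=
  (1/3 : ℝ) • (MonoidAlgebra.single 1 1 - MonoidAlgebra.single (Equiv.swap 0 1) 1 -
    MonoidAlgebra.single (finRotate 3) 1 + MonoidAlgebra.single (Equiv.swap 0 2) 1)


/- ------------------------------------------------------------------ -/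
/- Auxiliary machinery                                                 -/
/- ------------------------------------------------------------------ -/

section Aux

-- evaluation of matrix literals
lemma cval3_0 {α : Type*} (a b c : α) : ![a,b,c] 0 = a := rfl
lemma cval3_1 {α : Type*} (a b c : α) : ![a,b,c] 1 = b := rfl
lemma cval3_2 {α : Type*} (a b c : α) : ![a,b,c] 2 = c := rfl
lemma cval4_0 {α : Type*} (a b c d : α) : ![a,b,c,d] 0 = a := rfl
lemma cval4_1 {α : Type*} (a b c d : α) : ![a,b,c,d] 1 = b := rfl
lemma cval4_2 {α : Type*} (a b c d : α) : ![a,b,c,d] 2 = c := rfl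
lemma cval4_3 {α : Type*} (a b c d : α) : ![a,b,c,d] 3 = d := rfl

lemma snoc4 {α : Type*} (a b c d : α) : (Fin.snoc ![a,b,c] d : Fin 4 → α) = ![a,b,c,d] := by
  funext i; fin_cases i <;> simp [Fin.snoc] <;> rfl

lemma init4 {α : Type*} (v : Fin 4 → α) : Fin.init v = ![v 0, v 1, v 2] := by
  funext i; fin_cases i <;> simp [Fin.init] <;> rfl

-- group ring apply lemmas
lemma ma_add_apply {G : Type*} (x y : MonoidAlgebra ℝ G) (p : G) : (x + y).coeff p = x.coeff p + y.coeff p :=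
  Finsupp.add_apply x.coeff y.coeff p
lemma ma_sub_apply {G : Type*} (x y : MonoidAlgebra ℝ G) (p : G) : (x - y).coeff p = x.coeff p - y.coeff p :=
  Finsupp.sub_apply x.coeff y.coeff p
lemma ma_smul_apply {G : Type*} (c : ℝ) (x : MonoidAlgebra ℝ G) (p : G) : (c • x).coeff p = c * x.coeff p := by
  rw [MonoidAlgebra.coeff_smul_apply, smul_eq_mul]

lemma sum_single_mul {G : Type*} [Group G] [Fintype G] [DecidableEq G] (g : G) (c : ℝ) (f : G → ℝ) :
    (∑ p : G, (MonoidAlgebra.single g c : MonoidAlgebra ℝ G).coeff p * f p) = c * f g := by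
  rw [Finset.sum_eq_single g]
  · rw [MonoidAlgebra.single_apply, if_pos rfl]
  · intro p _ hp
    rw [MonoidAlgebra.single_apply, if_neg (Ne.symm hp), zero_mul]
  · intro h; exact absurd (Finset.mem_univ g) h

variable {V : Type} [AddCommGroup V] [Module ℝ V]

lemma fact_congr {r : ℕ} (a : MonoidAlgebra ℝ (Equiv.Perm (Fin r)))
    {F G : (Fin r → V) → ℝ} (h : ∀ x, F x = G x) (v : Fin r → V) :
    fact a F v = fact a G v := by
  simp only [fact]
  exact Finset.sum_congr rfl fun p _ => by rw [h]

lemma fact_astar {r : ℕ} (a : MonoidAlgebra ℝ (Equiv.Perm (Fin r)))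
    (F : (Fin r → V) → ℝ) (v : Fin r → V) :
    fact (astar a) F v = ∑ p : Equiv.Perm (Fin r), a.coeff p * F (fun i => v (p⁻¹ i)) := by
  show (∑ p : Equiv.Perm (Fin r), (astar a).coeff p * F (fun i => v (p i))) = _
  refine (Fintype.sum_equiv (Equiv.inv (Equiv.Perm (Fin r))) _ _ (fun p => ?_))
  simp only [astar, MonoidAlgebra.coeff_ofCoeff, Finsupp.coe_equivFunOnFinite_symm, Equiv.inv_apply, inv_inv]

lemma fact_sum {r : ℕ} (a : MonoidAlgebra ℝ (Equiv.Perm (Fin r))) {n : ℕ}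
    (F : Fin n → (Fin r → V) → ℝ) (v : Fin r → V) :
    (∑ j : Fin n, fact a (F j) v) = fact a (fun v' => ∑ j : Fin n, F j v') v := by
  simp only [fact]
  rw [Finset.sum_comm]
  exact Finset.sum_congr rfl fun p _ => (Finset.mul_sum _ _ _).symm

lemma gact_eq_fact {r : ℕ} (a : MonoidAlgebra ℝ (Equiv.Perm (Fin r)))
    (M : MultilinearMap ℝ (fun _ : Fin r => V) ℝ) (v : Fin r → V) :
    gact a M v = fact a (⇑M) v := by
  simp only [gact, fact, MultilinearMap.sum_apply, MultilinearMap.smul_apply,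
    MultilinearMap.domDomCongr_apply, smul_eq_mul]

/-- trilinear map from a 4-linear map by fixing the last argument -/
noncomputable def mk3 (R : MultilinearMap ℝ (fun _ : Fin 4 => V) ℝ) (u : V) :
    MultilinearMap ℝ (fun _ : Fin 3 => V) ℝ :=
  (LinearMap.applyₗ u).compMultilinearMap (MultilinearMap.curryRight R)

lemma mk3_apply (R : MultilinearMap ℝ (fun _ : Fin 4 => V) ℝ) (u : V) (x : Fin 3 → V) :
    mk3 R u x = R ![x 0, x 1, x 2, u] := by
  show R (Fin.snoc x u) = _
  rw [show (Fin.snoc x u : Fin 4 → V) = ![x 0, x 1, x 2, u] by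
    rw [← snoc4 (x 0) (x 1) (x 2) u]
    congr 1
    funext i; fin_cases i <;> rfl]

/-- 4-linear map `U ⊗ w` -/
noncomputable def mk4 (U : MultilinearMap ℝ (fun _ : Fin 3 => V) ℝ) (w : V →ₗ[ℝ] ℝ) :
    MultilinearMap ℝ (fun _ : Fin 4 => V) ℝ :=
  MultilinearMap.uncurryRight
    ((LinearMap.toSpanSingleton ℝ (V →ₗ[ℝ] ℝ) w).compMultilinearMap U)

lemma mk4_apply (U : MultilinearMap ℝ (fun _ : Fin 3 => V) ℝ) (w : V →ₗ[ℝ] ℝ)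
    (v : Fin 4 → V) : mk4 U w v = U ![v 0, v 1, v 2] * w (v 3) := by
  show (U (Fin.init v) • w) (v (Fin.last 3)) = _
  rw [LinearMap.smul_apply, smul_eq_mul, init4]
  rfl

lemma yt_expand : yt =
    MonoidAlgebra.single (1 : Equiv.Perm (Fin 4)) (1:ℝ)
    - MonoidAlgebra.single (Equiv.swap 0 1 : Equiv.Perm (Fin 4)) (1:ℝ)
    - MonoidAlgebra.single (Equiv.swap 2 3 : Equiv.Perm (Fin 4)) (1:ℝ)
    + MonoidAlgebra.single (Equiv.swap 0 1 * Equiv.swap 2 3 : Equiv.Perm (Fin 4)) (1:ℝ)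
    + MonoidAlgebra.single (Equiv.swap 0 2 : Equiv.Perm (Fin 4)) (1:ℝ)
    - MonoidAlgebra.single (Equiv.swap 0 2 * Equiv.swap 0 1 : Equiv.Perm (Fin 4)) (1:ℝ)
    - MonoidAlgebra.single (Equiv.swap 0 2 * Equiv.swap 2 3 : Equiv.Perm (Fin 4)) (1:ℝ)
    + MonoidAlgebra.single (Equiv.swap 0 2 * (Equiv.swap 0 1 * Equiv.swap 2 3) : Equiv.Perm (Fin 4)) (1:ℝ)
    + MonoidAlgebra.single (Equiv.swap 1 3 : Equiv.Perm (Fin 4)) (1:ℝ)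
    - MonoidAlgebra.single (Equiv.swap 1 3 * Equiv.swap 0 1 : Equiv.Perm (Fin 4)) (1:ℝ)
    - MonoidAlgebra.single (Equiv.swap 1 3 * Equiv.swap 2 3 : Equiv.Perm (Fin 4)) (1:ℝ)
    + MonoidAlgebra.single (Equiv.swap 1 3 * (Equiv.swap 0 1 * Equiv.swap 2 3) : Equiv.Perm (Fin 4)) (1:ℝ)
    + MonoidAlgebra.single (Equiv.swap 0 2 * Equiv.swap 1 3 : Equiv.Perm (Fin 4)) (1:ℝ)
    - MonoidAlgebra.single (Equiv.swap 0 2 * Equiv.swap 1 3 * Equiv.swap 0 1 : Equiv.Perm (Fin 4)) (1:ℝ)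
    - MonoidAlgebra.single (Equiv.swap 0 2 * Equiv.swap 1 3 * Equiv.swap 2 3 : Equiv.Perm (Fin 4)) (1:ℝ)
    + MonoidAlgebra.single (Equiv.swap 0 2 * Equiv.swap 1 3 * (Equiv.swap 0 1 * Equiv.swap 2 3) : Equiv.Perm (Fin 4)) (1:ℝ) := by
  rw [yt]
  simp only [mul_add, mul_sub, add_mul, sub_mul, MonoidAlgebra.single_mul_single,
    one_mul, mul_one]
  abel

lemma cp1 {α : Type*} (v : Fin 4 → α) :
    (fun i => v ((1 : Equiv.Perm (Fin 4))⁻¹ i)) = ![v 0, v 1, v 2, v 3] := by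
  funext i; fin_cases i <;> exact congrArg v (by decide)
lemma cp2 {α : Type*} (v : Fin 4 → α) :
    (fun i => v ((Equiv.swap 0 1 : Equiv.Perm (Fin 4))⁻¹ i)) = ![v 1, v 0, v 2, v 3] := by
  funext i; fin_cases i <;> exact congrArg v (by decide)
lemma cp3 {α : Type*} (v : Fin 4 → α) :
    (fun i => v ((Equiv.swap 2 3 : Equiv.Perm (Fin 4))⁻¹ i)) = ![v 0, v 1, v 3, v 2] := by
  funext i; fin_cases i <;> exact congrArg v (by decide)
lemma cp4 {α : Type*} (v : Fin 4 → α) :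
    (fun i => v ((Equiv.swap 0 1 * Equiv.swap 2 3 : Equiv.Perm (Fin 4))⁻¹ i)) = ![v 1, v 0, v 3, v 2] := by
  funext i; fin_cases i <;> exact congrArg v (by decide)
lemma cp5 {α : Type*} (v : Fin 4 → α) :
    (fun i => v ((Equiv.swap 0 2 : Equiv.Perm (Fin 4))⁻¹ i)) = ![v 2, v 1, v 0, v 3] := by
  funext i; fin_cases i <;> exact congrArg v (by decide)
lemma cp6 {α : Type*} (v : Fin 4 → α) :
    (fun i => v ((Equiv.swap 0 2 * Equiv.swap 0 1 : Equiv.Perm (Fin 4))⁻¹ i)) = ![v 2, v 0, v 1, v 3] := by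
  funext i; fin_cases i <;> exact congrArg v (by decide)
lemma cp7 {α : Type*} (v : Fin 4 → α) :
    (fun i => v ((Equiv.swap 0 2 * Equiv.swap 2 3 : Equiv.Perm (Fin 4))⁻¹ i)) = ![v 3, v 1, v 0, v 2] := by
  funext i; fin_cases i <;> exact congrArg v (by decide)
lemma cp8 {α : Type*} (v : Fin 4 → α) :
    (fun i => v ((Equiv.swap 0 2 * (Equiv.swap 0 1 * Equiv.swap 2 3) : Equiv.Perm (Fin 4))⁻¹ i)) = ![v 3, v 0, v 1, v 2] := by
  funext i; fin_cases i <;> exact congrArg v (by decide)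
lemma cp9 {α : Type*} (v : Fin 4 → α) :
    (fun i => v ((Equiv.swap 1 3 : Equiv.Perm (Fin 4))⁻¹ i)) = ![v 0, v 3, v 2, v 1] := by
  funext i; fin_cases i <;> exact congrArg v (by decide)
lemma cp10 {α : Type*} (v : Fin 4 → α) :
    (fun i => v ((Equiv.swap 1 3 * Equiv.swap 0 1 : Equiv.Perm (Fin 4))⁻¹ i)) = ![v 1, v 3, v 2, v 0] := by
  funext i; fin_cases i <;> exact congrArg v (by decide)
lemma cp11 {α : Type*} (v : Fin 4 → α) :
    (fun i => v ((Equiv.swap 1 3 * Equiv.swap 2 3 : Equiv.Perm (Fin 4))⁻¹ i)) = ![v 0, v 2, v 3, v 1] := by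
  funext i; fin_cases i <;> exact congrArg v (by decide)
lemma cp12 {α : Type*} (v : Fin 4 → α) :
    (fun i => v ((Equiv.swap 1 3 * (Equiv.swap 0 1 * Equiv.swap 2 3) : Equiv.Perm (Fin 4))⁻¹ i)) = ![v 1, v 2, v 3, v 0] := by
  funext i; fin_cases i <;> exact congrArg v (by decide)
lemma cp13 {α : Type*} (v : Fin 4 → α) :
    (fun i => v ((Equiv.swap 0 2 * Equiv.swap 1 3 : Equiv.Perm (Fin 4))⁻¹ i)) = ![v 2, v 3, v 0, v 1] := by
  funext i; fin_cases i <;> exact congrArg v (by decide)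
lemma cp14 {α : Type*} (v : Fin 4 → α) :
    (fun i => v ((Equiv.swap 0 2 * Equiv.swap 1 3 * Equiv.swap 0 1 : Equiv.Perm (Fin 4))⁻¹ i)) = ![v 2, v 3, v 1, v 0] := by
  funext i; fin_cases i <;> exact congrArg v (by decide)
lemma cp15 {α : Type*} (v : Fin 4 → α) :
    (fun i => v ((Equiv.swap 0 2 * Equiv.swap 1 3 * Equiv.swap 2 3 : Equiv.Perm (Fin 4))⁻¹ i)) = ![v 3, v 2, v 0, v 1] := by
  funext i; fin_cases i <;> exact congrArg v (by decide)
lemma cp16 {α : Type*} (v : Fin 4 → α) :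
    (fun i => v ((Equiv.swap 0 2 * Equiv.swap 1 3 * (Equiv.swap 0 1 * Equiv.swap 2 3) : Equiv.Perm (Fin 4))⁻¹ i)) = ![v 3, v 2, v 1, v 0] := by
  funext i; fin_cases i <;> exact congrArg v (by decide)

lemma EXP (F : (Fin 4 → V) → ℝ) (v : Fin 4 → V) :
    fact (astar yt) F v =
      F ![v 0, v 1, v 2, v 3]
      - F ![v 1, v 0, v 2, v 3]
      - F ![v 0, v 1, v 3, v 2]
      + F ![v 1, v 0, v 3, v 2]
      + F ![v 2, v 1, v 0, v 3]
      - F ![v 2, v 0, v 1, v 3]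
      - F ![v 3, v 1, v 0, v 2]
      + F ![v 3, v 0, v 1, v 2]
      + F ![v 0, v 3, v 2, v 1]
      - F ![v 1, v 3, v 2, v 0]
      - F ![v 0, v 2, v 3, v 1]
      + F ![v 1, v 2, v 3, v 0]
      + F ![v 2, v 3, v 0, v 1]
      - F ![v 2, v 3, v 1, v 0]
      - F ![v 3, v 2, v 0, v 1]
      + F ![v 3, v 2, v 1, v 0] := by
  rw [fact_astar, yt_expand]
  simp only [ma_add_apply, ma_sub_apply, add_mul, sub_mul, Finset.sum_add_distrib,
    Finset.sum_sub_distrib, sum_single_mul, cp1, cp2, cp3, cp4, cp5, cp6, cp7, cp8, cp9, cp10, cp11, cp12, cp13, cp14, cp15, cp16]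
  ring

lemma cq1 {α : Type*} (x : Fin 3 → α) :
    (fun i => x ((1 : Equiv.Perm (Fin 3)) i)) = ![x 0, x 1, x 2] := by
  funext i; fin_cases i <;> exact congrArg x (by decide)
lemma cq2 {α : Type*} (x : Fin 3 → α) :
    (fun i => x ((Equiv.swap 1 2 : Equiv.Perm (Fin 3)) i)) = ![x 0, x 2, x 1] := by
  funext i; fin_cases i <;> exact congrArg x (by decide)
lemma cq3 {α : Type*} (x : Fin 3 → α) :
    (fun i => x ((Equiv.swap 0 1 : Equiv.Perm (Fin 3)) i)) = ![x 1, x 0, x 2] := by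
  funext i; fin_cases i <;> exact congrArg x (by decide)
lemma cq4 {α : Type*} (x : Fin 3 → α) :
    (fun i => x ((finRotate 3 : Equiv.Perm (Fin 3)) i)) = ![x 1, x 2, x 0] := by
  funext i; fin_cases i <;> exact congrArg x (by decide)
lemma cq5 {α : Type*} (x : Fin 3 → α) :
    (fun i => x (((finRotate 3)⁻¹ : Equiv.Perm (Fin 3)) i)) = ![x 2, x 0, x 1] := by
  funext i; fin_cases i <;> exact congrArg x (by decide)
lemma cq6 {α : Type*} (x : Fin 3 → α) :
    (fun i => x ((Equiv.swap 0 2 : Equiv.Perm (Fin 3)) i)) = ![x 2, x 1, x 0] := by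
  funext i; fin_cases i <;> exact congrArg x (by decide)

lemma gact_expand (e : MonoidAlgebra ℝ (Equiv.Perm (Fin 3)))
    (U : MultilinearMap ℝ (fun _ : Fin 3 => V) ℝ) (x : Fin 3 → V) :
    gact e U x = ∑ p : Equiv.Perm (Fin 3), e.coeff p * U (fun i => x (p i)) :=
  gact_eq_fact e U x

lemma gact_eta (U : MultilinearMap ℝ (fun _ : Fin 3 => V) ℝ) (x : Fin 3 → V) :
    gact eta U x = (1/3 : ℝ) * U ![x 0, x 1, x 2] + (0 : ℝ) * U ![x 0, x 2, x 1]
      + (-(1/3) : ℝ) * U ![x 1, x 0, x 2] + (-(1/3) : ℝ) * U ![x 1, x 2, x 0]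
      + (0 : ℝ) * U ![x 2, x 0, x 1] + (1/3 : ℝ) * U ![x 2, x 1, x 0] := by
  rw [gact_expand, eta]
  simp only [ma_smul_apply, ma_add_apply, ma_sub_apply, add_mul, sub_mul, mul_assoc,
    Finset.sum_add_distrib, Finset.sum_sub_distrib, ← Finset.mul_sum, sum_single_mul,
    cq1, cq2, cq3, cq4, cq5, cq6]
  ring

lemma gact_xi (ν : ℝ) (U : MultilinearMap ℝ (fun _ : Fin 3 => V) ℝ) (x : Fin 3 → V) :
    gact (xi ν) U x = (1/3 : ℝ) * U ![x 0, x 1, x 2] + (ν/3 : ℝ) * U ![x 0, x 2, x 1]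
      + ((1-ν)/3 : ℝ) * U ![x 1, x 0, x 2] + (-(ν/3) : ℝ) * U ![x 1, x 2, x 0]
      + ((ν-1)/3 : ℝ) * U ![x 2, x 0, x 1] + (-(1/3) : ℝ) * U ![x 2, x 1, x 0] := by
  rw [gact_expand, xi]
  simp only [ma_smul_apply, ma_add_apply, ma_sub_apply, add_mul, sub_mul, mul_assoc,
    Finset.sum_add_distrib, Finset.sum_sub_distrib, ← Finset.mul_sum, sum_single_mul,
    cq1, cq2, cq3, cq4, cq5, cq6]
  ring

lemma eta_idem (U : MultilinearMap ℝ (fun _ : Fin 3 => V) ℝ) :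
    gact eta (gact eta U) = gact eta U := by
  refine MultilinearMap.ext fun x => ?_
  simp only [gact_eta, cval3_0, cval3_1, cval3_2]
  ring

lemma xi_idem (ν : ℝ) (U : MultilinearMap ℝ (fun _ : Fin 3 => V) ℝ) :
    gact (xi ν) (gact (xi ν) U) = gact (xi ν) U := by
  refine MultilinearMap.ext fun x => ?_
  simp only [gact_xi, cval3_0, cval3_1, cval3_2]
  ring

end Aux

section Master

variable {V : Type} [AddCommGroup V] [Module ℝ V]

lemma basis_decomp [FiniteDimensional ℝ V] {n : ℕ} (b : Module.Basis (Fin n) ℝ V)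
    (R : MultilinearMap ℝ (fun _ : Fin 4 => V) ℝ) (x1 x2 x3 x4 : V) :
    (∑ j : Fin n, R ![x1, x2, x3, b j] * b.coord j x4) = R ![x1, x2, x3, x4] := by
  set L : V →ₗ[ℝ] ℝ := MultilinearMap.curryRight R ![x1, x2, x3] with hLdef
  have hL : ∀ u : V, L u = R ![x1, x2, x3, u] := by
    intro u
    show R (Fin.snoc ![x1,x2,x3] u) = _
    rw [snoc4]
  have step1 : (∑ j : Fin n, R ![x1, x2, x3, b j] * b.coord j x4)
      = ∑ j : Fin n, b.coord j x4 • L (b j) :=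
    Finset.sum_congr rfl fun j _ => by rw [hL, smul_eq_mul, mul_comm]
  have step2 : L (∑ j : Fin n, b.coord j x4 • b j) = ∑ j : Fin n, b.coord j x4 • L (b j) := by
    rw [map_sum]
    exact Finset.sum_congr rfl fun j _ => by rw [L.map_smul]
  have step3 : (∑ j : Fin n, b.coord j x4 • b j) = x4 := by
    simp only [Module.Basis.coord_apply]
    exact b.sum_repr x4
  rw [step1, ← step2, step3, hL]

lemma master [FiniteDimensional ℝ V]
    (e : MonoidAlgebra ℝ (Equiv.Perm (Fin 3))) (c0 c1 c2 c3 c4 c5 κ : ℝ) (hκ : κ ≠ 0)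
    (hexp : ∀ (U : MultilinearMap ℝ (fun _ : Fin 3 => V) ℝ) (x : Fin 3 → V),
      gact e U x = c0 * U ![x 0, x 1, x 2] + c1 * U ![x 0, x 2, x 1] + c2 * U ![x 1, x 0, x 2]
        + c3 * U ![x 1, x 2, x 0] + c4 * U ![x 2, x 0, x 1] + c5 * U ![x 2, x 1, x 0])
    (hidem : ∀ U : MultilinearMap ℝ (fun _ : Fin 3 => V) ℝ, gact e (gact e U) = gact e U)
    (hcert : ∀ R : MultilinearMap ℝ (fun _ : Fin 4 => V) ℝ,
      (∀ w x y z : V, R ![w, x, y, z] = - R ![w, x, z, y]) →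
      (∀ w x y z : V, R ![w, x, y, z] = R ![y, z, w, x]) →
      (∀ w x y z : V, R ![w, x, y, z] + R ![w, y, z, x] + R ![w, z, x, y] = 0) →
      ∀ v : Fin 4 → V,
        fact (astar yt) (fun v' => c0 * R ![v' 0, v' 1, v' 2, v' 3] + c1 * R ![v' 0, v' 2, v' 1, v' 3]
          + c2 * R ![v' 1, v' 0, v' 2, v' 3] + c3 * R ![v' 1, v' 2, v' 0, v' 3]
          + c4 * R ![v' 2, v' 0, v' 1, v' 3] + c5 * R ![v' 2, v' 1, v' 0, v' 3]) v = κ * R v) :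
    {R : MultilinearMap ℝ (fun _ : Fin 4 => V) ℝ |
      (∀ w x y z : V, R ![w, x, y, z] = - R ![w, x, z, y]) ∧
      (∀ w x y z : V, R ![w, x, y, z] = R ![y, z, w, x]) ∧
      (∀ w x y z : V, R ![w, x, y, z] + R ![w, y, z, x] + R ![w, z, x, y] = 0)} =
    ↑(Submodule.span ℝ {T : MultilinearMap ℝ (fun _ : Fin 4 => V) ℝ |
      ∃ (U : MultilinearMap ℝ (fun _ : Fin 3 => V) ℝ) (w : V →ₗ[ℝ] ℝ),
        gact e U = U ∧
        ∀ v : Fin 4 → V,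
          T v = fact (astar yt) (fun v' => U ![v' 0, v' 1, v' 2] * w (v' 3)) v}) := by
  ext R
  simp only [Set.mem_setOf_eq, SetLike.mem_coe]
  constructor
  · rintro ⟨h1, h2, h3⟩
    obtain ⟨b⟩ : Nonempty (Module.Basis (Fin (Module.finrank ℝ V)) ℝ V) := ⟨Module.finBasis ℝ V⟩
    set n := Module.finrank ℝ V with hn
    -- the generators
    have hTv : ∀ (j : Fin n) (v : Fin 4 → V),
        gact (astar yt) (mk4 (gact e (mk3 R (b j))) (b.coord j)) v
          = fact (astar yt)
              (fun v' => (gact e (mk3 R (b j))) ![v' 0, v' 1, v' 2] * (b.coord j) (v' 3)) v := by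
      intro j v
      rw [gact_eq_fact]
      exact fact_congr _ (fun x => mk4_apply _ _ x) v
    have key : ∀ v : Fin 4 → V,
        (∑ j : Fin n, gact (astar yt) (mk4 (gact e (mk3 R (b j))) (b.coord j))) v = κ * R v := by
      intro v
      rw [MultilinearMap.sum_apply]
      have e1 : (∑ j : Fin n, gact (astar yt) (mk4 (gact e (mk3 R (b j))) (b.coord j)) v)
          = ∑ j : Fin n, fact (astar yt)
              (fun v' => (gact e (mk3 R (b j))) ![v' 0, v' 1, v' 2] * (b.coord j) (v' 3)) v :=
        Finset.sum_congr rfl fun j _ => hTv j v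
      rw [e1, fact_sum]
      have e2 : ∀ v' : Fin 4 → V,
          (∑ j : Fin n, (gact e (mk3 R (b j))) ![v' 0, v' 1, v' 2] * (b.coord j) (v' 3))
          = c0 * R ![v' 0, v' 1, v' 2, v' 3] + c1 * R ![v' 0, v' 2, v' 1, v' 3]
            + c2 * R ![v' 1, v' 0, v' 2, v' 3] + c3 * R ![v' 1, v' 2, v' 0, v' 3]
            + c4 * R ![v' 2, v' 0, v' 1, v' 3] + c5 * R ![v' 2, v' 1, v' 0, v' 3] := by
        intro v'
        have e3 : ∀ j : Fin n,
            (gact e (mk3 R (b j))) ![v' 0, v' 1, v' 2] * (b.coord j) (v' 3)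
            = (c0 * R ![v' 0, v' 1, v' 2, b j] + c1 * R ![v' 0, v' 2, v' 1, b j]
              + c2 * R ![v' 1, v' 0, v' 2, b j] + c3 * R ![v' 1, v' 2, v' 0, b j]
              + c4 * R ![v' 2, v' 0, v' 1, b j] + c5 * R ![v' 2, v' 1, v' 0, b j])
                * (b.coord j) (v' 3) := by
          intro j
          rw [hexp]
          simp only [cval3_0, cval3_1, cval3_2, mk3_apply]
        rw [Finset.sum_congr rfl fun j _ => e3 j]
        simp only [add_mul, Finset.sum_add_distrib, mul_assoc, ← Finset.mul_sum,
          basis_decomp b R]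
      rw [fact_congr _ e2 v]
      exact hcert R h1 h2 h3 v
    have hRrepr : R = κ⁻¹ • ∑ j : Fin n, gact (astar yt) (mk4 (gact e (mk3 R (b j))) (b.coord j)) := by
      refine MultilinearMap.ext fun v => ?_
      rw [MultilinearMap.smul_apply, key v, smul_eq_mul, ← mul_assoc, inv_mul_cancel₀ hκ, one_mul]
    rw [hRrepr]
    refine Submodule.smul_mem _ _ (Submodule.sum_mem _ fun j _ => Submodule.subset_span ?_)
    exact ⟨gact e (mk3 R (b j)), b.coord j, hidem _, fun v => hTv j v⟩
  · intro hR
    induction hR using Submodule.span_induction with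
    | mem T hT =>
      obtain ⟨U, w, -, hT⟩ := hT
      refine ⟨fun a b c d => ?_, fun a b c d => ?_, fun a b c d => ?_⟩
      · rw [hT ![a,b,c,d], hT ![a,b,d,c], EXP, EXP]
        simp only [cval4_0, cval4_1, cval4_2, cval4_3]
        ring
      · rw [hT ![a,b,c,d], hT ![c,d,a,b], EXP, EXP]
        simp only [cval4_0, cval4_1, cval4_2, cval4_3]
        ring
      · rw [hT ![a,b,c,d], hT ![a,c,d,b], hT ![a,d,b,c], EXP, EXP, EXP]
        simp only [cval4_0, cval4_1, cval4_2, cval4_3]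
        ring
    | zero => exact ⟨fun a b c d => by simp, fun a b c d => by simp, fun a b c d => by simp⟩
    | add f g hf hg ihf ihg =>
      obtain ⟨f1, f2, f3⟩ := ihf
      obtain ⟨g1, g2, g3⟩ := ihg
      refine ⟨fun a b c d => ?_, fun a b c d => ?_, fun a b c d => ?_⟩ <;>
        simp only [MultilinearMap.add_apply]
      · linear_combination f1 a b c d + g1 a b c d
      · linear_combination f2 a b c d + g2 a b c d
      · linear_combination f3 a b c d + g3 a b c d
    | smul t f hf ihf =>
      obtain ⟨f1, f2, f3⟩ := ihf
      refine ⟨fun a b c d => ?_, fun a b c d => ?_, fun a b c d => ?_⟩ <;>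
        simp only [MultilinearMap.smul_apply, smul_eq_mul]
      · linear_combination t * f1 a b c d
      · linear_combination t * f2 a b c d
      · linear_combination t * f3 a b c d

end Master

section Certs

variable {V : Type} [AddCommGroup V] [Module ℝ V]

lemma hcert_eta (R : MultilinearMap ℝ (fun _ : Fin 4 => V) ℝ)
    (h1 : ∀ w x y z : V, R ![w, x, y, z] = - R ![w, x, z, y])
    (h2 : ∀ w x y z : V, R ![w, x, y, z] = R ![y, z, w, x])
    (h3 : ∀ w x y z : V, R ![w, x, y, z] + R ![w, y, z, x] + R ![w, z, x, y] = 0)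
    (v : Fin 4 → V) :
    fact (astar yt) (fun v' => (1/3 : ℝ) * R ![v' 0, v' 1, v' 2, v' 3] + (0:ℝ) * R ![v' 0, v' 2, v' 1, v' 3]
      + (-(1/3) : ℝ) * R ![v' 1, v' 0, v' 2, v' 3] + (-(1/3) : ℝ) * R ![v' 1, v' 2, v' 0, v' 3]
      + (0:ℝ) * R ![v' 2, v' 0, v' 1, v' 3] + (1/3 : ℝ) * R ![v' 2, v' 1, v' 0, v' 3]) v
      = (16:ℝ) * R v := by
  rw [EXP]
  simp only [cval4_0, cval4_1, cval4_2, cval4_3]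
  rw [show R v = R ![v 0, v 1, v 2, v 3] from congrArg R (by funext i; fin_cases i <;> rfl)]
  linear_combination (-4 : ℝ) * h1 (v 0) (v 1) (v 2) (v 3) + (-8/3 : ℝ) * h2 (v 0) (v 1) (v 2) (v 3) + (-8 : ℝ) * h3 (v 0) (v 1) (v 2) (v 3) + (4/3 : ℝ) * h2 (v 0) (v 1) (v 3) (v 2) + (4/3 : ℝ) * h3 (v 0) (v 1) (v 3) (v 2) + (20/3 : ℝ) * h1 (v 0) (v 2) (v 1) (v 3) + (-22/3 : ℝ) * h2 (v 0) (v 2) (v 1) (v 3) + (2/3 : ℝ) * h2 (v 0) (v 2) (v 3) (v 1) + (22/3 : ℝ) * h2 (v 0) (v 3) (v 1) (v 2) + (-2/3 : ℝ) * h2 (v 0) (v 3) (v 2) (v 1) + (4 : ℝ) * h1 (v 1) (v 0) (v 2) (v 3) + (4/3 : ℝ) * h2 (v 1) (v 0) (v 2) (v 3) + (-20/3 : ℝ) * h3 (v 1) (v 0) (v 2) (v 3) + (-4/3 : ℝ) * h2 (v 1) (v 0) (v 3) (v 2) + (-4/3 : ℝ) * h3 (v 1) (v 0) (v 3) (v 2)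 + (8 : ℝ) * h1 (v 1) (v 2) (v 0) (v 3) + (-2/3 : ℝ) * h2 (v 1) (v 2) (v 3) (v 0) + (2/3 : ℝ) * h2 (v 1) (v 3) (v 2) (v 0) + (4/3 : ℝ) * h1 (v 2) (v 0) (v 1) (v 3) + (-4/3 : ℝ) * h3 (v 2) (v 0) (v 1) (v 3) + (-2/3 : ℝ) * h2 (v 2) (v 0) (v 3) (v 1) + (2/3 : ℝ) * h2 (v 2) (v 1) (v 3) (v 0)

lemma hcert_xi (ν : ℝ) (R : MultilinearMap ℝ (fun _ : Fin 4 => V) ℝ)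
    (h1 : ∀ w x y z : V, R ![w, x, y, z] = - R ![w, x, z, y])
    (h2 : ∀ w x y z : V, R ![w, x, y, z] = R ![y, z, w, x])
    (h3 : ∀ w x y z : V, R ![w, x, y, z] + R ![w, y, z, x] + R ![w, z, x, y] = 0)
    (v : Fin 4 → V) :
    fact (astar yt) (fun v' => (1/3 : ℝ) * R ![v' 0, v' 1, v' 2, v' 3] + (ν/3 : ℝ) * R ![v' 0, v' 2, v' 1, v' 3]
      + ((1-ν)/3 : ℝ) * R ![v' 1, v' 0, v' 2, v' 3] + (-(ν/3) : ℝ) * R ![v' 1, v' 2, v' 0, v' 3]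
      + ((ν-1)/3 : ℝ) * R ![v' 2, v' 0, v' 1, v' 3] + (-(1/3) : ℝ) * R ![v' 2, v' 1, v' 0, v' 3]) v
      = (8*ν-4) * R v := by
  rw [EXP]
  simp only [cval4_0, cval4_1, cval4_2, cval4_3]
  rw [show R v = R ![v 0, v 1, v 2, v 3] from congrArg R (by funext i; fin_cases i <;> rfl)]
  linear_combination ((5/3 : ℝ) + (-10/3 : ℝ) * ν) * h2 (v 0) (v 1) (v 2) (v 3) + ((2 : ℝ) + (-4 : ℝ) * ν) * h3 (v 0) (v 1) (v 2) (v 3) + ((-1/3 : ℝ) + (2/3 : ℝ) * ν) * h2 (v 0) (v 1) (v 3) (v 2) + ((2/3 : ℝ) + (-4/3 : ℝ) * ν) * h3 (v 0) (v 1) (v 3) (v 2) + ((-8/3 : ℝ) + (16/3 : ℝ) * ν) * h1 (v 0) (v 2) (v 1) (v 3) + ((4/3 : ℝ) + (-8/3 : ℝ) * ν) * h2 (v 0) (v 2) (v 1) (v 3) + ((1/3 : ℝ) + (-2/3 : ℝ) * ν) * h2 (v 0) (v 2) (v 3) (v 1) + ((-4/3 : ℝ) + (8/3 : ℝ) * ν)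 * h2 (v 0) (v 3) (v 1) (v 2) + ((-1/3 : ℝ) + (2/3 : ℝ) * ν) * h2 (v 0) (v 3) (v 2) (v 1) + ((-1/3 : ℝ) + (2/3 : ℝ) * ν) * h2 (v 1) (v 0) (v 2) (v 3) + ((2/3 : ℝ) + (-4/3 : ℝ) * ν) * h3 (v 1) (v 0) (v 2) (v 3) + ((1/3 : ℝ) + (-2/3 : ℝ) * ν) * h2 (v 1) (v 0) (v 3) (v 2) + ((-2/3 : ℝ) + (4/3 : ℝ) * ν) * h3 (v 1) (v 0) (v 3) (v 2) + ((-1/3 : ℝ) + (2/3 : ℝ) * ν) * h2 (v 1) (v 2) (v 3) (v 0) + ((1/3 : ℝ) + (-2/3 : ℝ) * ν) * h2 (v 1) (v 3) (v 2) (v 0) + ((-4/3 : ℝ) + (8/3 : ℝ) * ν) * h1 (v 2) (v 0) (v 1) (v 3) + ((4/3 : ℝ) + (-8/3 : ℝ) * ν) * h3 (v 2) (v 0) (v 1) (v 3) + ((2/3 : ℝ) + (-4/3 : ℝ) * ν) * h2 (v 2) (v 0) (v 3) (v 1) + ((-2/3 : ℝ) + (4/3 : ℝ) * ν) * h2 (v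 2) (v 1) (v 3) (v 0)

end Certs

/-- For `e = η` or `e = ξ_ν` with `ν ≠ 1/2`, the space `A(V)` of algebraic
curvature tensors equals the linear span of
`{y_t*(U⊗w) : U trilinear with eU = U, w linear}`. -/
theorem stmt_12 (V : Type) [AddCommGroup V] [Module ℝ V] [FiniteDimensional ℝ V]
    (e : MonoidAlgebra ℝ (Equiv.Perm (Fin 3)))
    (he : e = eta ∨ ∃ ν : ℝ, ν ≠ 1/2 ∧ e = xi ν) :
    {R : MultilinearMap ℝ (fun _ : Fin 4 => V) ℝ |
      (∀ w x y z : V, R ![w, x, y, z] = - R ![w, x, z, y]) ∧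
      (∀ w x y z : V, R ![w, x, y, z] = R ![y, z, w, x]) ∧
      (∀ w x y z : V, R ![w, x, y, z] + R ![w, y, z, x] + R ![w, z, x, y] = 0)} =
    ↑(Submodule.span ℝ {T : MultilinearMap ℝ (fun _ : Fin 4 => V) ℝ |
      ∃ (U : MultilinearMap ℝ (fun _ : Fin 3 => V) ℝ) (w : V →ₗ[ℝ] ℝ),
        gact e U = U ∧
        ∀ v : Fin 4 → V,
          T v = fact (astar yt) (fun v' => U ![v' 0, v' 1, v' 2] * w (v' 3)) v}) := by
  rcases he with rfl | ⟨ν, hν, rfl⟩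
  · exact master eta (1/3) 0 (-(1/3)) (-(1/3)) 0 (1/3) 16 (by norm_num)
      (fun U x => gact_eta U x) (fun U => eta_idem U)
      (fun R h1 h2 h3 v => hcert_eta R h1 h2 h3 v)
  · refine master (xi ν) (1/3) (ν/3) ((1-ν)/3) (-(ν/3)) ((ν-1)/3) (-(1/3)) (8*ν-4)
      (fun h => hν (by linarith)) (fun U x => gact_xi ν U x) (fun U => xi_idem ν U)
      (fun R h1 h2 h3 v => hcert_xi ν R h1 h2 h3 v)
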